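/- Let 𝔅' ⊆ 𝔅(X) be nonempty with the forward exchange property, suppose X contains an element that is neither a loop nor a coloop, and let x be the first such element (smallest index). Assume 𝔅'_{∖x} := {B ∈ 𝔅' : x ∉ B} and 𝔅'_{|x} := {B ∈ 𝔅' : x ∈ B} are both nonempty, and set 𝔅'_{/x} := {π_x(B∖x) : B ∈ 𝔅'_{|x}}. Then the sequence 0 → 𝒫(X∖x, 𝔅'_{∖x}) → 𝒫(X,𝔅') → 𝒫(X/x, 𝔅'_{/x}) → 0 is exact, where the first map is multiplication by p_x and the second is the restriction of Sym(π_x): multiplication by p_x maps 𝒫(X∖x,𝔅'_{∖x}) injectively into 𝒫(X,𝔅'), Sym(π_x) maps 𝒫(X,𝔅') onto 𝒫(X/x,𝔅'_{/x}), and the kernel of Sym(π_x) restricted to 𝒫(X,𝔅') equals p_x·𝒫(X∖x,𝔅'_{∖x}). -/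

import Mathlib

noncomputable section

variable {r N : ℕ}

/-- `p_u`, the degree-one polynomial associated with the vector `u ∈ ℝ^r`. -/
def linPoly {r : ℕ} (u : Fin r → ℝ) : MvPolynomial (Fin r) ℝ :=
  ∑ i, MvPolynomial.C (u i) * MvPolynomial.X i

/-- `p_Y = ∏_{i ∈ Y} p_{X i}` for a sublist `Y` of the list `X`. -/
def prodPoly {r N : ℕ} (X : Fin N → Fin r → ℝ) (Y : Finset (Fin N)) : MvPolynomial (Fin r) ℝ :=
  ∏ i ∈ Y, linPoly (X i)

/-- The pairing `⟨p, f⟩ = (p(∂/∂t₁,…,∂/∂t_r) f)(0)`, written via coefficients: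
`⟨p,f⟩ = ∑_α α! · p_α · f_α`. -/
def pairing {r : ℕ} (p f : MvPolynomial (Fin r) ℝ) : ℝ :=
  ∑ α ∈ p.support, (∏ i, ((α i).factorial : ℝ)) * p.coeff α * f.coeff α

lemma pairing_zero {r : ℕ} (q : MvPolynomial (Fin r) ℝ) : pairing q 0 = 0 := by
  simp [pairing]

lemma pairing_add {r : ℕ} (q f g : MvPolynomial (Fin r) ℝ) :
    pairing q (f + g) = pairing q f + pairing q g := by
  unfold pairing
  rw [← Finset.sum_add_distrib]
  exact Finset.sum_congr rfl fun α _ => by rw [MvPolynomial.coeff_add]; ring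

lemma pairing_smul {r : ℕ} (q : MvPolynomial (Fin r) ℝ) (c : ℝ) (f : MvPolynomial (Fin r) ℝ) :
    pairing q (c • f) = c * pairing q f := by
  unfold pairing
  rw [Finset.mul_sum]
  exact Finset.sum_congr rfl fun α _ => by rw [MvPolynomial.coeff_smul, smul_eq_mul]; ring

/-- The kernel (Macaulay inverse system) of an ideal `I`:
all polynomials annihilated (in the sense of the pairing) by every element of `I`. -/
def kerIdeal {r : ℕ} (I : Ideal (MvPolynomial (Fin r) ℝ)) :
    Submodule ℝ (MvPolynomial (Fin r) ℝ) where
  carrier := {f | ∀ q ∈ I, pairing q f = 0}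
  add_mem' := fun hf hg q hq => by
    rw [pairing_add, hf q hq, hg q hq, add_zero]
  zero_mem' := fun q _ => pairing_zero q
  smul_mem' := fun c f hf q hq => by
    rw [pairing_smul, hf q hq, mul_zero]

section Lists

variable {M : Type*} [AddCommGroup M] [Module ℝ M]

/-- `B ⊆ G` is (the index set of) a sublist of the list `v` restricted to the ground set `G`
that is a basis of the ambient space. -/
def basesOn (v : Fin N → M) (G : Finset (Fin N)) : Set (Finset (Fin N)) :=
  {B | B ⊆ G ∧ LinearIndependent ℝ ((B : Set (Fin N)).restrict v) ∧
    Submodule.span ℝ (v '' (B : Set (Fin N))) = ⊤}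

/-- `j` is externally active with respect to the basis `B`:
`v j ∈ span {v e : e ∈ B, e ≤ j}` and `j ∉ B`. -/
def isExtActive (v : Fin N → M) (B : Finset (Fin N)) (j : Fin N) : Prop :=
  j ∉ B ∧ v j ∈ Submodule.span ℝ (v '' {e : Fin N | e ∈ B ∧ e ≤ j})

open Classical in
/-- The set `E(B)` of externally active elements (within the ground set `G`). -/
def extSetOn (v : Fin N → M) (G B : Finset (Fin N)) : Finset (Fin N) :=
  G.filter (fun j => isExtActive v B j)

/-- `C` is a cocircuit w.r.t. the collection of bases `𝔅`: an inclusion-minimal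
sublist of the ground set `G` intersecting every basis in `𝔅`. -/
def isCocircuitOn (G : Finset (Fin N)) (𝔅 : Set (Finset (Fin N))) (C : Finset (Fin N)) : Prop :=
  C ⊆ G ∧ (∀ B ∈ 𝔅, (C ∩ B).Nonempty) ∧
    ∀ C' ⊆ C, (∀ B ∈ 𝔅, (C' ∩ B).Nonempty) → C' = C

/-- A set of bases `𝔅` of the list `v` has the forward exchange property. -/
def forwardExchange (v : Fin N → M) (𝔅 : Set (Finset (Fin N))) : Prop :=
  ∀ B ∈ 𝔅, ∀ b ∈ B, ∀ j : Fin N,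
    v j ∈ Submodule.span ℝ (v '' {e : Fin N | e ∈ B ∧ e ≤ b}) →
    v j ∉ Submodule.span ℝ (v '' {e : Fin N | e ∈ B ∧ e < b}) →
    ¬ isExtActive v B j →
    insert j (B.erase b) ∈ 𝔅

end Lists

/-- The ideal `𝒥` generated by the cocircuit polynomials `p_C`. -/
def Jideal (X : Fin N → Fin r → ℝ) (G : Finset (Fin N)) (𝔅 : Set (Finset (Fin N))) :
    Ideal (MvPolynomial (Fin r) ℝ) :=
  Ideal.span {p | ∃ C : Finset (Fin N), isCocircuitOn G 𝔅 C ∧ p = prodPoly X C}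

/-- The generalised `𝒟`-space: the kernel of the cocircuit ideal. -/
def Dspace (X : Fin N → Fin r → ℝ) (G : Finset (Fin N)) (𝔅 : Set (Finset (Fin N))) :
    Submodule ℝ (MvPolynomial (Fin r) ℝ) :=
  kerIdeal (Jideal X G 𝔅)

/-- `Q_B := p_{X∖(B ∪ E(B))}` (within the ground set `G`). -/
def QB (X : Fin N → Fin r → ℝ) (G B : Finset (Fin N)) : MvPolynomial (Fin r) ℝ :=
  prodPoly X (G \ (B ∪ extSetOn X G B))

/-- The central `𝒫`-space: the span of `p_Y` over sublists `Y` of `G` whose complement spans. -/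
def PspaceOn (X : Fin N → Fin r → ℝ) (G : Finset (Fin N)) :
    Submodule ℝ (MvPolynomial (Fin r) ℝ) :=
  Submodule.span ℝ {p | ∃ Y : Finset (Fin N), Y ⊆ G ∧
    Submodule.span ℝ (X '' ((G \ Y : Finset (Fin N)) : Set (Fin N))) = ⊤ ∧ p = prodPoly X Y}

/-- The generalised `𝒫`-space `𝒫(X,𝔅') = span {Q_B : B ∈ 𝔅'}`. -/
def PspaceB (X : Fin N → Fin r → ℝ) (G : Finset (Fin N)) (𝔅 : Set (Finset (Fin N))) :
    Submodule ℝ (MvPolynomial (Fin r) ℝ) :=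
  Submodule.span ℝ {p | ∃ B ∈ 𝔅, p = QB X G B}

/-- The directional derivative `D_u = ∑ i, uᵢ ∂/∂tᵢ` as a linear map. -/
def dirDeriv {r : ℕ} (u : Fin r → ℝ) :
    MvPolynomial (Fin r) ℝ →ₗ[ℝ] MvPolynomial (Fin r) ℝ :=
  ∑ i, u i • (MvPolynomial.pderiv i).toLinearMap

end


noncomputable section AuxSection
namespace Aux
open MvPolynomial

open MvPolynomial

lemma linPoly_coeff {r : ℕ} (u : Fin r → ℝ) (i : Fin r) :
    (linPoly u).coeff (Finsupp.single i 1) = u i := by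
  simp only [linPoly, coeff_sum, coeff_C_mul, coeff_X']
  rw [Finset.sum_eq_single i]
  · simp
  · intro j _ hj
    rw [if_neg, mul_zero]
    intro h
    exact hj (by simpa using (Finsupp.single_left_injective one_ne_zero h))
  · simp

lemma linPoly_ne_zero {r : ℕ} {u : Fin r → ℝ} (hu : u ≠ 0) : linPoly u ≠ 0 := by
  intro h
  apply hu
  funext i
  have := linPoly_coeff u i
  rw [h] at this
  simpa using this.symm

lemma linPoly_smul {r : ℕ} (c : ℝ) (u : Fin r → ℝ) :
    linPoly (c • u) = MvPolynomial.C c * linPoly u := by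
  simp only [linPoly, Finset.mul_sum]
  refine Finset.sum_congr rfl fun i _ => ?_
  simp [map_mul, mul_assoc]

lemma linPoly_sum {r : ℕ} {ι : Type*} (s : Finset ι) (f : ι → Fin r → ℝ) :
    linPoly (∑ j ∈ s, f j) = ∑ j ∈ s, linPoly (f j) := by
  simp only [linPoly]
  rw [Finset.sum_comm]
  refine Finset.sum_congr rfl fun i _ => ?_
  rw [← Finset.sum_mul, ← map_sum]
  simp

lemma linPoly_zero {r : ℕ} : linPoly (0 : Fin r → ℝ) = 0 := by
  simp [linPoly]

lemma prodPoly_insert {r N : ℕ} (X : Fin N → Fin r → ℝ) {Y : Finset (Fin N)} {x : Fin N}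
    (hx : x ∉ Y) : prodPoly X (insert x Y) = linPoly (X x) * prodPoly X Y :=
  Finset.prod_insert hx


open MvPolynomial



/-- The algebra endomorphism of `ℝ[t]` induced by a linear map `F : ℝ^r → ℝ^r`. -/
def contrHom {r : ℕ} (F : (Fin r → ℝ) →ₗ[ℝ] (Fin r → ℝ)) :
    MvPolynomial (Fin r) ℝ →ₐ[ℝ] MvPolynomial (Fin r) ℝ :=
  MvPolynomial.aeval (fun i => linPoly (F (Pi.single i 1)))

lemma contrHom_linPoly {r : ℕ} (F : (Fin r → ℝ) →ₗ[ℝ] (Fin r → ℝ)) (u : Fin r → ℝ) :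
    contrHom F (linPoly u) = linPoly (F u) := by
  have hu : F u = ∑ i, u i • F (Pi.single i 1) := by
    simp only [← map_smul F, ← map_sum F]
    congr 1
    have := pi_eq_sum_univ u
    convert this using 2 with i
    funext j
    simp [Pi.single_apply, eq_comm]
  rw [hu, linPoly_sum]
  simp only [linPoly_smul]
  rw [contrHom, linPoly, map_sum]
  refine Finset.sum_congr rfl fun i _ => ?_
  simp [contrHom]

lemma contrHom_prodPoly {r N : ℕ} (F : (Fin r → ℝ) →ₗ[ℝ] (Fin r → ℝ))
    (X : Fin N → Fin r → ℝ) (Y : Finset (Fin N)) :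
    contrHom F (prodPoly X Y) = prodPoly (⇑F ∘ X) Y := by
  rw [prodPoly, map_prod]
  exact Finset.prod_congr rfl fun i _ => contrHom_linPoly F (X i)

/-- Existence of a linear endomorphism with kernel exactly the line through a nonzero `u`. -/
lemma exists_proj {r : ℕ} {u : Fin r → ℝ} (hu : u ≠ 0) :
    ∃ F : (Fin r → ℝ) →ₗ[ℝ] (Fin r → ℝ), LinearMap.ker F = Submodule.span ℝ {u} := by
  obtain ⟨i, hi⟩ : ∃ i, u i ≠ 0 := by
    by_contra h
    push_neg at h
    exact hu (funext h)
  set φ : (Fin r → ℝ) →ₗ[ℝ] ℝ := (u i)⁻¹ • (LinearMap.proj i) with hφ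
  refine ⟨LinearMap.id - φ.smulRight u, ?_⟩
  have hφu : φ u = 1 := by
    simp [hφ, inv_mul_cancel₀ hi]
  apply le_antisymm
  · intro w hw
    simp only [LinearMap.mem_ker, LinearMap.sub_apply, LinearMap.id_apply,
      LinearMap.smulRight_apply, sub_eq_zero] at hw
    rw [hw]
    exact Submodule.smul_mem _ _ (Submodule.mem_span_singleton_self u)
  · rw [Submodule.span_singleton_le_iff_mem]
    simp [hφu]


end Aux

namespace Aux
variable {N : ℕ} {M M₂ : Type*} [AddCommGroup M] [Module ℝ M] [AddCommGroup M₂] [Module ℝ M₂]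

/-- `B` is a basis of the span of the ground set `G`. -/
def myBasis (v : Fin N → M) (G B : Finset (Fin N)) : Prop :=
  B ⊆ G ∧ LinearIndependent ℝ ((B : Set (Fin N)).restrict v) ∧
    Submodule.span ℝ (v '' (B : Set (Fin N))) = Submodule.span ℝ (v '' (G : Set (Fin N)))

lemma isExtActive_def (v : Fin N → M) (B : Finset (Fin N)) (j : Fin N) :
    isExtActive v B j ↔ j ∉ B ∧ v j ∈ Submodule.span ℝ (v '' {e : Fin N | e ∈ B ∧ e ≤ j}) :=
  Iff.rfl

lemma mem_extSetOn {v : Fin N → M} {G B : Finset (Fin N)} {j : Fin N} :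
    j ∈ extSetOn v G B ↔ j ∈ G ∧ isExtActive v B j := by
  simp [extSetOn]

/-- A coloop (in `G`) belongs to every basis. -/
lemma coloop_mem {v : Fin N → M} {G B : Finset (Fin N)} {e : Fin N}
    (heG : e ∈ G)
    (hc : Submodule.span ℝ (v '' ((G.erase e : Finset (Fin N)) : Set (Fin N))) ≠
      Submodule.span ℝ (v '' (G : Set (Fin N))))
    (hBG : B ⊆ G)
    (hsp : Submodule.span ℝ (v '' (B : Set (Fin N))) = Submodule.span ℝ (v '' (G : Set (Fin N)))) :
    e ∈ B := by
  by_contra he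
  apply hc
  apply le_antisymm
  · exact Submodule.span_mono (Set.image_mono (by intro y hy; exact (Finset.mem_of_mem_erase (by exact_mod_cast hy) : y ∈ G)))
  · rw [← hsp]
    apply Submodule.span_mono
    apply Set.image_mono
    intro y hy
    have hyB : y ∈ B := hy
    exact Finset.mem_erase.2 ⟨fun h => he (h ▸ hyB), hBG hyB⟩

/-- Members of an independent family are nonzero. -/
lemma basis_ne_zero {v : Fin N → M} {B : Finset (Fin N)}
    (hind : LinearIndependent ℝ ((B : Set (Fin N)).restrict v)) {e : Fin N} (he : e ∈ B) :
    v e ≠ 0 := by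
  exact hind.ne_zero ⟨e, he⟩

/-- Key lemma: the first non-loop non-coloop `x` is not externally active w.r.t. any basis
not containing it. -/
lemma not_extActive_min {v : Fin N → M} {G B : Finset (Fin N)} {x : Fin N}
    (hxG : x ∈ G) (hxB : x ∉ B) (hBG : B ⊆ G)
    (hind : LinearIndependent ℝ ((B : Set (Fin N)).restrict v))
    (hvx : v x ≠ 0)
    (hxnc : Submodule.span ℝ (v '' ((G.erase x : Finset (Fin N)) : Set (Fin N))) =
      Submodule.span ℝ (v '' (G : Set (Fin N))))
    (hmin : ∀ j ∈ G, j < x → v j = 0 ∨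
      Submodule.span ℝ (v '' ((G.erase j : Finset (Fin N)) : Set (Fin N))) ≠
        Submodule.span ℝ (v '' (G : Set (Fin N)))) :
    ¬ isExtActive v B x := by
  rintro ⟨-, hsp⟩
  classical
  set S : Set (Fin N) := {e : Fin N | e ∈ B ∧ e ≤ x} with hS
  rw [Submodule.mem_span_set] at hsp
  obtain ⟨c, hsupp, hsum⟩ := hsp
  -- the support is nonempty
  have hcne : c.support.Nonempty := by
    rcases Finset.eq_empty_or_nonempty c.support with h | h
    · exfalso
      apply hvx
      rw [← hsum, Finsupp.sum, h, Finset.sum_empty]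
    · exact h
  obtain ⟨w, hw⟩ := hcne
  obtain ⟨e, heS, hew⟩ : ∃ e, e ∈ S ∧ v e = w := by
    have := hsupp hw
    obtain ⟨e, he, hew⟩ := this
    exact ⟨e, he, hew⟩
  have heB : e ∈ B := heS.1
  have hex : e < x := lt_of_le_of_ne heS.2 (fun h => hxB (h ▸ heB))
  have heG : e ∈ G := hBG heB
  have hcoloop : Submodule.span ℝ (v '' ((G.erase e : Finset (Fin N)) : Set (Fin N))) ≠
      Submodule.span ℝ (v '' (G : Set (Fin N))) := by
    rcases hmin e heG hex with h | h
    · exact absurd h (basis_ne_zero hind heB)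
    · exact h
  apply hcoloop
  -- show v e ∈ span (v '' (G.erase e)), hence spans agree
  have hve : v e ∈ Submodule.span ℝ (v '' ((G.erase e : Finset (Fin N)) : Set (Fin N))) := by
    have hsum' : c w • w + ∑ w' ∈ c.support.erase w, c w' • w' = v x := by
      rw [Finset.add_sum_erase c.support (fun w' => c w' • w') hw]
      rw [show (∑ w' ∈ c.support, c w' • w') = c.sum fun mi r => r • mi from rfl, hsum]
    have hterm : ∀ w' ∈ c.support.erase w,
        w' ∈ Submodule.span ℝ (v '' ((G.erase e : Finset (Fin N)) : Set (Fin N))) := by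
      intro w' hw'
      obtain ⟨hne, hw's⟩ := Finset.mem_erase.1 hw'
      obtain ⟨e', he'S, he'w⟩ := hsupp hw's
      apply Submodule.subset_span
      refine ⟨e', ?_, he'w⟩
      have he'e : e' ≠ e := fun h => hne (by rw [← he'w, h, hew])
      exact_mod_cast Finset.mem_erase.2 ⟨he'e, hBG he'S.1⟩
    have hvxmem : v x ∈ Submodule.span ℝ (v '' ((G.erase e : Finset (Fin N)) : Set (Fin N))) := by
      apply Submodule.subset_span
      refine ⟨x, ?_, rfl⟩
      exact_mod_cast Finset.mem_erase.2 ⟨(ne_of_lt hex).symm, hxG⟩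
    have hcw : c w ≠ 0 := Finsupp.mem_support_iff.1 hw
    have : w = (c w)⁻¹ • (v x - ∑ w' ∈ c.support.erase w, c w' • w') := by
      rw [← hsum']
      simp [smul_smul, inv_mul_cancel₀ hcw]
    rw [hew, this]
    exact Submodule.smul_mem _ _ (Submodule.sub_mem _ hvxmem (Submodule.sum_mem _
      (fun w' hw' => Submodule.smul_mem _ _ (hterm w' hw'))))
  apply le_antisymm
  · exact Submodule.span_mono (Set.image_mono (by
      intro y hy
      exact (Finset.mem_of_mem_erase (by exact_mod_cast hy) : y ∈ G)))
  · rw [Submodule.span_le]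
    rintro - ⟨y, hy, rfl⟩
    have hyG : y ∈ G := hy
    by_cases hye : y = e
    · rw [hye]; exact hve
    · apply Submodule.subset_span
      refine ⟨y, ?_, rfl⟩
      exact_mod_cast Finset.mem_erase.2 ⟨hye, hyG⟩


/-- Membership in the image of a map with given kernel. -/
lemma map_mem_span_iff {v : Fin N → M} (π : M →ₗ[ℝ] M₂) {x : Fin N}
    (hker : LinearMap.ker π = Submodule.span ℝ {v x}) (S : Set (Fin N)) (w : M) :
    π w ∈ Submodule.span ℝ ((⇑π ∘ v) '' S) ↔
      w ∈ Submodule.span ℝ (v '' S) ⊔ Submodule.span ℝ {v x} := by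
  rw [Set.image_comp, Submodule.span_image, ← hker]
  constructor
  · rintro ⟨u, hu, huw⟩
    have : w - u ∈ LinearMap.ker π := by
      rw [LinearMap.mem_ker, map_sub, huw, sub_self]
    have hw : w = u + (w - u) := by abel
    rw [hw]
    exact Submodule.add_mem _ (Submodule.mem_sup_left hu) (Submodule.mem_sup_right this)
  · intro hw
    rw [Submodule.mem_sup] at hw
    obtain ⟨u, hu, k, hk, rfl⟩ := hw
    refine ⟨u, hu, ?_⟩
    rw [map_add, (LinearMap.mem_ker.1 hk), add_zero]

/-- Deletion set equality: if `x ∉ B` is not externally active, the complement set on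
ground `G` is the complement set on `G.erase x` plus `x`. -/
lemma ground_sdiff_eq_insert {v : Fin N → M} {G B : Finset (Fin N)} {x : Fin N}
    (hxG : x ∈ G) (hxB : x ∉ B) (hnEA : ¬ isExtActive v B x) :
    G \ (B ∪ extSetOn v G B) =
      insert x (G.erase x \ (B ∪ extSetOn v (G.erase x) B)) := by
  ext j
  simp only [Finset.mem_sdiff, Finset.mem_union, Finset.mem_insert, Finset.mem_erase,
    mem_extSetOn, not_or]
  constructor
  · rintro ⟨hjG, hjB, hjE⟩
    by_cases hjx : j = x
    · exact Or.inl hjx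
    · exact Or.inr ⟨⟨hjx, hjG⟩, hjB, fun h => hjE ⟨hjG, h.2⟩⟩
  · rintro (rfl | ⟨⟨hjx, hjG⟩, hjB, hjE⟩)
    · exact ⟨hxG, hxB, fun h => hnEA h.2⟩
    · exact ⟨hjG, hjB, fun h => hjE ⟨⟨hjx, hjG⟩, h.2⟩⟩

/-- The external-activity span condition transfers under contraction. -/
lemma contr_EA_iff {v : Fin N → M} (π : M →ₗ[ℝ] M₂) {B : Finset (Fin N)} {x : Fin N}
    (hxB : x ∈ B) (hker : LinearMap.ker π = Submodule.span ℝ {v x})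
    {j : Fin N} (hxj : x ≤ j) :
    (⇑π ∘ v) j ∈ Submodule.span ℝ ((⇑π ∘ v) '' {e : Fin N | e ∈ B.erase x ∧ e ≤ j}) ↔
      v j ∈ Submodule.span ℝ (v '' {e : Fin N | e ∈ B ∧ e ≤ j}) := by
  have hset : {e : Fin N | e ∈ B ∧ e ≤ j} = insert x {e : Fin N | e ∈ B.erase x ∧ e ≤ j} := by
    ext e
    simp only [Set.mem_setOf_eq, Set.mem_insert_iff, Finset.mem_erase]
    constructor
    · rintro ⟨heB, hej⟩
      by_cases hex : e = x
      · exact Or.inl hex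
      · exact Or.inr ⟨⟨hex, heB⟩, hej⟩
    · rintro (rfl | ⟨⟨-, heB⟩, hej⟩)
      · exact ⟨hxB, hxj⟩
      · exact ⟨heB, hej⟩
  have : (⇑π ∘ v) j = π (v j) := rfl
  rw [this, map_mem_span_iff π hker, hset, Set.image_insert_eq, Submodule.span_insert,
    sup_comm]

/-- Contraction set equality. -/
lemma contr_sdiff_eq {v : Fin N → M} (π : M →ₗ[ℝ] M₂) {G B : Finset (Fin N)} {x : Fin N}
    (hxB : x ∈ B) (hBG : B ⊆ G)
    (hker : LinearMap.ker π = Submodule.span ℝ {v x})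
    (hloops : ∀ j ∈ G, j < x → j ∉ B → v j = 0) :
    G.erase x \ (B.erase x ∪ extSetOn (⇑π ∘ v) (G.erase x) (B.erase x)) =
      G \ (B ∪ extSetOn v G B) := by
  ext j
  simp only [Finset.mem_sdiff, Finset.mem_union, mem_extSetOn, not_or]
  constructor
  · rintro ⟨hjGx, hjB', hjE'⟩
    obtain ⟨hjx, hjG⟩ := Finset.mem_erase.1 hjGx
    have hjB : j ∉ B := fun h => hjB' (Finset.mem_erase.2 ⟨hjx, h⟩)
    have hjBx : j ∉ B.erase x := hjB'
    refine ⟨hjG, hjB, fun hEA => ?_⟩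
    have hEA2 := ((isExtActive_def _ _ _).1 hEA.2).2
    apply hjE'
    refine ⟨hjGx, (isExtActive_def _ _ _).2 ⟨hjBx, ?_⟩⟩
    rcases lt_or_ge j x with hlt | hle
    · have : v j = 0 := hloops j hjG hlt hjB
      show π (v j) ∈ _
      rw [this, map_zero]
      exact Submodule.zero_mem _
    · exact (contr_EA_iff π hxB hker hle).2 hEA2
  · rintro ⟨hjG, hjB, hjE⟩
    have hjx : j ≠ x := fun h => hjB (h ▸ hxB)
    have hjBx : j ∉ B.erase x := fun h => hjB (Finset.mem_of_mem_erase h)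
    refine ⟨Finset.mem_erase.2 ⟨hjx, hjG⟩, hjBx, ?_⟩
    intro hEA'
    have hEA2 := ((isExtActive_def _ _ _).1 hEA'.2).2
    apply hjE
    refine ⟨hjG, (isExtActive_def _ _ _).2 ⟨hjB, ?_⟩⟩
    rcases lt_or_ge j x with hlt | hle
    · rw [hloops j hjG hlt hjB]
      exact Submodule.zero_mem _
    · exact (contr_EA_iff π hxB hker hle).1 hEA2


lemma coe_insert_erase {B : Finset (Fin N)} {x : Fin N} (hxB : x ∈ B) :
    (B : Set (Fin N)) = insert x ((B.erase x : Finset (Fin N)) : Set (Fin N)) := by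
  rw [← Finset.coe_insert, Finset.insert_erase hxB]

lemma span_image_insert {v : Fin N → M} {B : Finset (Fin N)} {x : Fin N} (hxB : x ∈ B) :
    Submodule.span ℝ (v '' (B : Set (Fin N))) =
      Submodule.span ℝ {v x} ⊔
        Submodule.span ℝ (v '' ((B.erase x : Finset (Fin N)) : Set (Fin N))) := by
  rw [coe_insert_erase hxB, Set.image_insert_eq, Submodule.span_insert]

/-- Deletion preserves bases avoiding `x` (if `x` is not a coloop). -/
lemma basis_del {v : Fin N → M} {G B : Finset (Fin N)} {x : Fin N}
    (hB : myBasis v G B) (hxB : x ∉ B)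
    (hxnc : Submodule.span ℝ (v '' ((G.erase x : Finset (Fin N)) : Set (Fin N))) =
      Submodule.span ℝ (v '' (G : Set (Fin N)))) :
    myBasis v (G.erase x) B := by
  obtain ⟨hBG, hind, hsp⟩ := hB
  refine ⟨?_, hind, ?_⟩
  · intro e he
    exact Finset.mem_erase.2 ⟨fun h => hxB (h ▸ he), hBG he⟩
  · rw [hsp, hxnc]

/-- Contraction turns a basis containing `x` into a basis of the contracted list. -/
lemma basis_contr {v : Fin N → M} (π : M →ₗ[ℝ] M₂) {G B : Finset (Fin N)} {x : Fin N}
    (hB : myBasis v G B) (hxB : x ∈ B)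
    (hker : LinearMap.ker π = Submodule.span ℝ {v x}) :
    myBasis (⇑π ∘ v) (G.erase x) (B.erase x) := by
  obtain ⟨hBG, hind, hsp⟩ := hB
  have himg : ∀ (S : Set (Fin N)), (⇑π ∘ v) '' S = π '' (v '' S) := fun S => by
    rw [Set.image_comp]
  refine ⟨Finset.erase_subset_erase x hBG, ?_, ?_⟩
  · -- linear independence
    set u : ((B : Set (Fin N))) → M := (B : Set (Fin N)).restrict v with hu
    have hdisj : Disjoint (Submodule.span ℝ (v '' ((B.erase x : Finset (Fin N)) : Set (Fin N))))
        (LinearMap.ker π) := by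
      rw [hker]
      have hsets : Disjoint {e : (B : Set (Fin N)) | (e : Fin N) ∈ B.erase x}
          ({⟨x, hxB⟩} : Set (B : Set (Fin N))) := by
        rw [Set.disjoint_singleton_right]
        simp
      have := hind.disjoint_span_image hsets
      have h1 : u '' {e : (B : Set (Fin N)) | (e : Fin N) ∈ B.erase x} =
          v '' ((B.erase x : Finset (Fin N)) : Set (Fin N)) := by
        ext w
        constructor
        · rintro ⟨e, he, rfl⟩
          exact ⟨e, he, rfl⟩
        · rintro ⟨e, he, rfl⟩
          have heB : e ∈ B := Finset.mem_of_mem_erase (by exact_mod_cast he)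
          exact ⟨⟨e, heB⟩, by exact_mod_cast he, rfl⟩
      have h2 : u '' ({⟨x, hxB⟩} : Set (B : Set (Fin N))) = {v x} := by
        simp [hu]
        rfl
      rw [h1, h2] at this
      exact this
    have hw : LinearIndependent ℝ (((B.erase x : Finset (Fin N)) : Set (Fin N)).restrict v) := by
      have hincl : ∀ e : ((B.erase x : Finset (Fin N)) : Set (Fin N)), (e : Fin N) ∈ B :=
        fun e => Finset.mem_of_mem_erase (by exact_mod_cast e.2)
      have := hind.comp
        (fun e : ((B.erase x : Finset (Fin N)) : Set (Fin N)) =>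
          (⟨(e : Fin N), hincl e⟩ : (B : Set (Fin N))))
        (fun a b hab => Subtype.ext (by
          have : ((⟨(a : Fin N), hincl a⟩ : (B : Set (Fin N))) : Fin N) =
              ((⟨(b : Fin N), hincl b⟩ : (B : Set (Fin N))) : Fin N) := congrArg Subtype.val hab
          exact this))
      exact this
    have := hw.map (f := π) (by
      have e : Set.range (((B.erase x : Finset (Fin N)) : Set (Fin N)).restrict v) =
          v '' ((B.erase x : Finset (Fin N)) : Set (Fin N)) := (Set.image_eq_range _ _).symm
      rw [e]
      exact hdisj)
    exact this
  · -- spans agree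
    have hkb : Submodule.map π (LinearMap.ker π) = ⊥ := by
      ext y
      simp only [Submodule.mem_map, LinearMap.mem_ker, Submodule.mem_bot]
      constructor
      · rintro ⟨w, hw, rfl⟩
        exact hw
      · rintro rfl
        exact ⟨0, map_zero π, map_zero π⟩
    have key : ∀ (C : Finset (Fin N)), x ∈ C →
        Submodule.span ℝ ((⇑π ∘ v) '' ((C.erase x : Finset (Fin N)) : Set (Fin N))) =
          Submodule.map π (Submodule.span ℝ (v '' (C : Set (Fin N)))) := by
      intro C hxC
      rw [himg, Submodule.span_image, span_image_insert hxC, Submodule.map_sup, ← hker, hkb,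
        bot_sup_eq]
    rw [key B hxB, key G (hBG hxB), hsp]


end Aux

end AuxSection

/-- `𝒫(X/x, 𝔅'_{/x})`, realised inside `Sym(ℝ^r/ℝx) ≅ ℝ[s₁,…,s_r]/(p_x)`:
the span of the images of the polynomials `Q_{B'}` for `B' ∈ 𝔅'_{/x}`, where
`Q_{B'} = p_{(X/x) ∖ (B' ∪ E(B'))}` with external activity computed in the
contracted list `π_x ∘ X` on the ground set `X∖x`. -/
noncomputable def PspaceContrB {r N : ℕ} (X : Fin N → Fin r → ℝ) (i0 : Fin N)
    (𝔅' : Set (Finset (Fin N))) :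
    Submodule ℝ (MvPolynomial (Fin r) ℝ ⧸ Ideal.span {linPoly (X i0)}) :=
  Submodule.span ℝ {q | ∃ B' ∈ {C | ∃ B ∈ 𝔅', i0 ∈ B ∧ C = B.erase i0},
    q = Ideal.Quotient.mk (Ideal.span {linPoly (X i0)})
      (prodPoly X (Finset.univ.erase i0 \ (B' ∪
        extSetOn ((Submodule.span ℝ {X i0}).mkQ ∘ X) (Finset.univ.erase i0) B')))}


noncomputable section IndepSection
namespace Aux

open MvPolynomial

/-- `Q_B = 1` and all bases coincide when every element is a loop or a coloop. -/
lemma indep_base {n r : ℕ} (v : Fin n → Fin r → ℝ) (G : Finset (Fin n))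
    (hnx : ∀ x ∈ G, v x = 0 ∨
      Submodule.span ℝ (v '' ((G.erase x : Finset (Fin n)) : Set (Fin n))) ≠
        Submodule.span ℝ (v '' (G : Set (Fin n))))
    (S : Finset (Finset (Fin n))) (c : Finset (Fin n) → ℝ)
    (hS : ∀ B ∈ S, myBasis v G B)
    (hsum : ∑ B ∈ S, c B • QB v G B = 0) :
    ∀ B ∈ S, c B = 0 := by
  intro B hB
  obtain ⟨hBG, hind, hsp⟩ := hS B hB
  have hchar : ∀ B' ∈ S, ∀ e : Fin n, e ∈ B' ↔ (e ∈ G ∧ v e ≠ 0) := by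
    intro B' hB' e
    obtain ⟨hBG', hind', hsp'⟩ := hS B' hB'
    constructor
    · intro he
      exact ⟨hBG' he, basis_ne_zero hind' he⟩
    · rintro ⟨heG, hve⟩
      rcases hnx e heG with h | h
      · exact absurd h hve
      · exact coloop_mem heG h hBG' hsp'
  have hBeq : ∀ B' ∈ S, B' = B := by
    intro B' hB'
    ext e
    rw [hchar B' hB' e, ← hchar B hB e]
  have hSsing : S = {B} := Finset.eq_singleton_iff_unique_mem.2 ⟨hB, hBeq⟩
  have hQB : QB v G B = 1 := by
    have hempty : G \ (B ∪ extSetOn v G B) = ∅ := by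
      apply Finset.eq_empty_of_forall_notMem
      intro j hj
      rw [Finset.mem_sdiff, Finset.mem_union, not_or] at hj
      obtain ⟨hjG, hjB, hjE⟩ := hj
      rcases hnx j hjG with h | h
      · apply hjE
        rw [mem_extSetOn]
        exact ⟨hjG, hjB, by rw [h]; exact Submodule.zero_mem _⟩
      · exact hjB (coloop_mem hjG h hBG hsp)
    rw [QB, hempty, prodPoly, Finset.prod_empty]
  rw [hSsing, Finset.sum_singleton, hQB, smul_eq_C_mul, mul_one] at hsum
  exact (map_eq_zero (C : ℝ →+* MvPolynomial (Fin r) ℝ)).1 hsum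

/-- The polynomials `Q_B` over distinct bases are linearly independent. -/
lemma indep_QB : ∀ (m : ℕ) {n r : ℕ} (v : Fin n → Fin r → ℝ) (G : Finset (Fin n)),
    G.card ≤ m →
    ∀ (S : Finset (Finset (Fin n))) (c : Finset (Fin n) → ℝ),
    (∀ B ∈ S, myBasis v G B) →
    ∑ B ∈ S, c B • QB v G B = 0 → ∀ B ∈ S, c B = 0 := by
  intro m
  induction m with
  | zero =>
    intro n r v G hcard S c hS hsum
    have hG : G = ∅ := Finset.card_eq_zero.1 (Nat.le_zero.1 hcard)
    subst hG
    exact indep_base v ∅ (by simp) S c hS hsum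
  | succ m IH =>
    intro n r v G hcard S c hS hsum
    classical
    by_cases hx : ∃ x ∈ G, v x ≠ 0 ∧
        Submodule.span ℝ (v '' ((G.erase x : Finset (Fin n)) : Set (Fin n))) =
          Submodule.span ℝ (v '' (G : Set (Fin n)))
    · -- take the minimal such x
      set T : Finset (Fin n) := G.filter (fun x => v x ≠ 0 ∧
        Submodule.span ℝ (v '' ((G.erase x : Finset (Fin n)) : Set (Fin n))) =
          Submodule.span ℝ (v '' (G : Set (Fin n)))) with hT
      have hTne : T.Nonempty := by
        obtain ⟨x, hxG, hxp⟩ := hx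
        exact ⟨x, Finset.mem_filter.2 ⟨hxG, hxp⟩⟩
      set x := T.min' hTne with hxdef
      have hxT : x ∈ T := T.min'_mem hTne
      obtain ⟨hxG, hvx, hxnc⟩ : x ∈ G ∧ v x ≠ 0 ∧ _ := by
        have := Finset.mem_filter.1 hxT
        exact ⟨this.1, this.2.1, this.2.2⟩
      have hmin : ∀ j ∈ G, j < x → v j = 0 ∨
          Submodule.span ℝ (v '' ((G.erase j : Finset (Fin n)) : Set (Fin n))) ≠
            Submodule.span ℝ (v '' (G : Set (Fin n))) := by
        intro j hjG hjx
        by_contra h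
        push_neg at h
        have : j ∈ T := Finset.mem_filter.2 ⟨hjG, h.1, h.2⟩
        exact absurd (T.min'_le j this) (not_le.2 hjx)
      have hcard' : (G.erase x).card ≤ m := by
        have := Finset.card_erase_of_mem hxG
        omega
      -- loops below x outside any basis of S
      have hloops : ∀ B ∈ S, ∀ j ∈ G, j < x → j ∉ B → v j = 0 := by
        intro B hB j hjG hjx hjB
        obtain ⟨hBG, hind, hsp⟩ := hS B hB
        rcases hmin j hjG hjx with h | h
        · exact h
        · exact absurd (coloop_mem hjG h hBG hsp) hjB
      -- the projection
      obtain ⟨F, hF⟩ := exists_proj hvx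
      have hFvx : F (v x) = 0 := by
        rw [← LinearMap.mem_ker, hF]
        exact Submodule.mem_span_singleton_self _
      set S1 := S.filter (fun B => x ∈ B) with hS1
      set S2 := S.filter (fun B => x ∉ B) with hS2
      -- factorization on S2
      have hfac : ∀ B ∈ S2, QB v G B = linPoly (v x) * QB v (G.erase x) B := by
        intro B hB2
        obtain ⟨hBS, hxB⟩ := Finset.mem_filter.1 hB2
        obtain ⟨hBG, hind, hsp⟩ := hS B hBS
        have hnEA : ¬ isExtActive v B x :=
          not_extActive_min hxG hxB hBG hind hvx hxnc hmin
        rw [QB, ground_sdiff_eq_insert hxG hxB hnEA, prodPoly_insert, QB]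
        intro hmem
        exact (Finset.notMem_erase x G) ((Finset.sdiff_subset) hmem)
      -- contraction identity on S1
      have hcontr : ∀ B ∈ S1,
          contrHom F (QB v G B) = QB (⇑F ∘ v) (G.erase x) (B.erase x) := by
        intro B hB1
        obtain ⟨hBS, hxB⟩ := Finset.mem_filter.1 hB1
        obtain ⟨hBG, hind, hsp⟩ := hS B hBS
        rw [QB, contrHom_prodPoly, ← contr_sdiff_eq F hxB hBG hF (hloops B hBS), QB]
      -- apply contrHom to the sum
      have hmapped : ∑ B ∈ S1, c B • QB (⇑F ∘ v) (G.erase x) (B.erase x) = 0 := by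
        have h0 : contrHom F (∑ B ∈ S, c B • QB v G B) = 0 := by
          rw [hsum, map_zero]
        rw [map_sum] at h0
        simp only [map_smul] at h0
        rw [← Finset.sum_filter_add_sum_filter_not S (fun B => x ∈ B)] at h0
        have h2zero : ∑ B ∈ S2, c B • contrHom F (QB v G B) = 0 := by
          apply Finset.sum_eq_zero
          intro B hB2
          rw [hfac B hB2, map_mul, contrHom_linPoly, hFvx, linPoly_zero, zero_mul, smul_zero]
        rw [← hS1] at h0
        rw [show S.filter (fun B => ¬ x ∈ B) = S2 from rfl, h2zero, add_zero] at h0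
        rw [← h0]
        exact Finset.sum_congr rfl (fun B hB1 => by rw [hcontr B hB1])
      -- reindex over erased bases
      have hinj : ∀ B1 ∈ S1, ∀ B2 ∈ S1, B1.erase x = B2.erase x → B1 = B2 := by
        intro B1 h1 B2 h2 h
        have hx1 : x ∈ B1 := (Finset.mem_filter.1 h1).2
        have hx2 : x ∈ B2 := (Finset.mem_filter.1 h2).2
        rw [← Finset.insert_erase hx1, ← Finset.insert_erase hx2, h]
      set S' := S1.image (fun B => B.erase x) with hS'
      set c' : Finset (Fin n) → ℝ := fun B' => c (insert x B') with hc'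
      have hsum' : ∑ B' ∈ S', c' B' • QB (⇑F ∘ v) (G.erase x) B' = 0 := by
        rw [hS', Finset.sum_image hinj, ← hmapped]
        refine Finset.sum_congr rfl (fun B hB1 => ?_)
        have hxB : x ∈ B := (Finset.mem_filter.1 hB1).2
        rw [hc']
        simp only [Finset.insert_erase hxB]
      have hbases' : ∀ B' ∈ S', myBasis (⇑F ∘ v) (G.erase x) B' := by
        intro B' hB'
        obtain ⟨B, hB1, rfl⟩ := Finset.mem_image.1 hB'
        obtain ⟨hBS, hxB⟩ := Finset.mem_filter.1 hB1
        exact basis_contr F (hS B hBS) hxB hF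
      have hc1zero : ∀ B ∈ S1, c B = 0 := by
        intro B hB1
        have hxB : x ∈ B := (Finset.mem_filter.1 hB1).2
        have := IH (⇑F ∘ v) (G.erase x) hcard' S' c' hbases' hsum'
          (B.erase x) (Finset.mem_image_of_mem _ hB1)
        rw [hc'] at this
        simpa [Finset.insert_erase hxB] using this
      -- now the deletion part
      have hsum2 : ∑ B ∈ S2, c B • QB v (G.erase x) B = 0 := by
        have h0 : ∑ B ∈ S2, c B • QB v G B = 0 := by
          have hsplit : ∑ B ∈ S1, c B • QB v G B + ∑ B ∈ S2, c B • QB v G B =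
              ∑ B ∈ S, c B • QB v G B :=
            Finset.sum_filter_add_sum_filter_not S (fun B => x ∈ B) _
          have hz : ∑ B ∈ S1, c B • QB v G B = 0 :=
            Finset.sum_eq_zero (fun B hB => by rw [hc1zero B hB, zero_smul])
          rw [hsum, hz, zero_add] at hsplit
          exact hsplit
        have : linPoly (v x) * ∑ B ∈ S2, c B • QB v (G.erase x) B = 0 := by
          rw [Finset.mul_sum, ← h0]
          refine Finset.sum_congr rfl (fun B hB2 => ?_)
          rw [hfac B hB2, mul_smul_comm]
        rcases mul_eq_zero.1 this with h | h
        · exact absurd h (linPoly_ne_zero hvx)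
        · exact h
      have hbases2 : ∀ B ∈ S2, myBasis v (G.erase x) B := by
        intro B hB2
        obtain ⟨hBS, hxB⟩ := Finset.mem_filter.1 hB2
        exact basis_del (hS B hBS) hxB hxnc
      have hc2zero : ∀ B ∈ S2, c B = 0 :=
        fun B hB2 => IH v (G.erase x) hcard' S2 c hbases2 hsum2 B hB2
      intro B hB
      by_cases hxB : x ∈ B
      · exact hc1zero B (Finset.mem_filter.2 ⟨hB, hxB⟩)
      · exact hc2zero B (Finset.mem_filter.2 ⟨hB, hxB⟩)
    · push_neg at hx
      refine indep_base v G ?_ S c hS hsum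
      intro y hyG
      by_cases hvy : v y = 0
      · exact Or.inl hvy
      · exact Or.inr (hx y hyG hvy)

/-- Every element of the `P`-space is a finite combination of the `Q_B`. -/
lemma mem_span_QB {n r : ℕ} (v : Fin n → Fin r → ℝ) (G : Finset (Fin n))
    (𝔅 : Set (Finset (Fin n))) {p : MvPolynomial (Fin r) ℝ}
    (hp : p ∈ PspaceB v G 𝔅) :
    ∃ S : Finset (Finset (Fin n)), (∀ B ∈ S, B ∈ 𝔅) ∧
      ∃ c : Finset (Fin n) → ℝ, p = ∑ B ∈ S, c B • QB v G B := by
  classical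
  rw [PspaceB, Submodule.mem_span_set'] at hp
  obtain ⟨k, f, g, hfg⟩ := hp
  choose Bf hBf hQf using fun i => (g i).2
  refine ⟨Finset.univ.image Bf, ?_, fun B => ∑ i ∈ Finset.univ.filter (fun i => Bf i = B), f i, ?_⟩
  · intro B hB
    obtain ⟨i, -, rfl⟩ := Finset.mem_image.1 hB
    exact hBf i
  · calc p = ∑ i ∈ Finset.univ, f i • (g i : MvPolynomial (Fin r) ℝ) := hfg.symm
    _ = ∑ B ∈ Finset.univ.image Bf, ∑ i ∈ Finset.univ.filter (fun i => Bf i = B),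
          f i • (g i : MvPolynomial (Fin r) ℝ) :=
        (Finset.sum_fiberwise_of_maps_to (fun i _ => Finset.mem_image_of_mem Bf (Finset.mem_univ i)) _).symm
    _ = ∑ B ∈ Finset.univ.image Bf,
          (∑ i ∈ Finset.univ.filter (fun i => Bf i = B), f i) • QB v G B := by
        refine Finset.sum_congr rfl (fun B hB => ?_)
        rw [Finset.sum_smul]
        refine Finset.sum_congr rfl (fun i hi => ?_)
        have hBi : Bf i = B := (Finset.mem_filter.1 hi).2
        rw [← hBi, ← hQf i]

end Aux
end IndepSection

/-- deletion-contraction exact sequence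
`0 → 𝒫(X∖x, 𝔅'_{∖x}) → 𝒫(X,𝔅') → 𝒫(X/x, 𝔅'_{/x}) → 0` (multiplication by `p_x`,
then `Sym(π_x)`, realised as the quotient map `ℝ[s] → ℝ[s]/(p_x)`) for a forward
exchange set of bases `𝔅'` and `x` the first element of `X` that is neither a loop
nor a coloop (assuming restriction and deletion of `𝔅'` at `x` are nonempty). -/
theorem statement14 {r N : ℕ} (X : Fin N → Fin r → ℝ)
    (hX : Submodule.span ℝ (Set.range X) = ⊤)
    (𝔅' : Set (Finset (Fin N))) (hne : 𝔅'.Nonempty)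
    (hsub : 𝔅' ⊆ basesOn X Finset.univ)
    (hfe : forwardExchange X 𝔅')
    (i0 : Fin N) (hloop : X i0 ≠ 0)
    (hcoloop : Submodule.span ℝ
      (X '' ((Finset.univ.erase i0 : Finset (Fin N)) : Set (Fin N))) = ⊤)
    (hmin : ∀ j : Fin N, j < i0 → X j = 0 ∨
      Submodule.span ℝ (X '' ((Finset.univ.erase j : Finset (Fin N)) : Set (Fin N))) ≠ ⊤)
    (hdel : {B ∈ 𝔅' | i0 ∉ B}.Nonempty)
    (hres : {B ∈ 𝔅' | i0 ∈ B}.Nonempty) :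
    (∀ p ∈ PspaceB X (Finset.univ.erase i0) {B ∈ 𝔅' | i0 ∉ B},
      linPoly (X i0) * p ∈ PspaceB X Finset.univ 𝔅') ∧
    (∀ p ∈ PspaceB X (Finset.univ.erase i0) {B ∈ 𝔅' | i0 ∉ B},
      linPoly (X i0) * p = 0 → p = 0) ∧
    (∀ p ∈ PspaceB X Finset.univ 𝔅',
      Ideal.Quotient.mk (Ideal.span {linPoly (X i0)}) p ∈ PspaceContrB X i0 𝔅') ∧
    (∀ q ∈ PspaceContrB X i0 𝔅', ∃ p ∈ PspaceB X Finset.univ 𝔅',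
      Ideal.Quotient.mk (Ideal.span {linPoly (X i0)}) p = q) ∧
    (∀ p ∈ PspaceB X Finset.univ 𝔅',
      (Ideal.Quotient.mk (Ideal.span {linPoly (X i0)}) p = 0 ↔
        ∃ g ∈ PspaceB X (Finset.univ.erase i0) {B ∈ 𝔅' | i0 ∉ B},
          p = linPoly (X i0) * g)) := by
  classical
  have hGspan : Submodule.span ℝ (X '' ((Finset.univ : Finset (Fin N)) : Set (Fin N))) = ⊤ := by
    rw [Finset.coe_univ, Set.image_univ, hX]
  have hker : LinearMap.ker (Submodule.span ℝ {X i0}).mkQ = Submodule.span ℝ {X i0} :=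
    Submodule.ker_mkQ _
  have hmy : ∀ B ∈ 𝔅', Aux.myBasis X Finset.univ B := by
    intro B hB
    obtain ⟨h1, h2, h3⟩ := hsub hB
    exact ⟨h1, h2, by rw [h3, hGspan]⟩
  have hloops : ∀ B ∈ 𝔅', ∀ j : Fin N, j < i0 → j ∉ B → X j = 0 := by
    intro B hB j hj hjB
    obtain ⟨h1, h2, h3⟩ := hsub hB
    rcases hmin j hj with h | h
    · exact h
    · exact absurd (Aux.coloop_mem (Finset.mem_univ j) (by rw [hGspan]; exact h) h1
        (by rw [h3, hGspan])) hjB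
  have hminG : ∀ j ∈ (Finset.univ : Finset (Fin N)), j < i0 → X j = 0 ∨
      Submodule.span ℝ (X '' ((Finset.univ.erase j : Finset (Fin N)) : Set (Fin N))) ≠
        Submodule.span ℝ (X '' ((Finset.univ : Finset (Fin N)) : Set (Fin N))) := by
    intro j _ hj
    rcases hmin j hj with h | h
    · exact Or.inl h
    · exact Or.inr (by rw [hGspan]; exact h)
  have hxnc : Submodule.span ℝ (X '' ((Finset.univ.erase i0 : Finset (Fin N)) : Set (Fin N))) =
      Submodule.span ℝ (X '' ((Finset.univ : Finset (Fin N)) : Set (Fin N))) := by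
    rw [hGspan]; exact hcoloop
  have hfac : ∀ B ∈ 𝔅', i0 ∉ B →
      QB X Finset.univ B = linPoly (X i0) * QB X (Finset.univ.erase i0) B := by
    intro B hB hiB
    obtain ⟨h1, h2, h3⟩ := hsub hB
    have hnEA : ¬ isExtActive X B i0 :=
      Aux.not_extActive_min (Finset.mem_univ i0) hiB h1 h2 hloop hxnc hminG
    rw [QB, Aux.ground_sdiff_eq_insert (Finset.mem_univ i0) hiB hnEA, Aux.prodPoly_insert, QB]
    intro hmem
    exact (Finset.notMem_erase i0 Finset.univ) ((Finset.sdiff_subset) hmem)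
  have hcontr : ∀ B ∈ 𝔅', i0 ∈ B →
      Finset.univ.erase i0 \ (B.erase i0 ∪
          extSetOn (⇑(Submodule.span ℝ {X i0}).mkQ ∘ X) (Finset.univ.erase i0) (B.erase i0)) =
        Finset.univ \ (B ∪ extSetOn X Finset.univ B) := by
    intro B hB hiB
    exact Aux.contr_sdiff_eq _ hiB (hsub hB).1 hker (fun j _ hj hjB => hloops B hB j hj hjB)
  refine ⟨?_, ?_, ?_, ?_, ?_⟩
  -- Part 1: multiplication by p_x lands in 𝒫(X,𝔅')
  · intro p hp
    have hle : Submodule.map (LinearMap.mulLeft ℝ (linPoly (X i0)))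
        (PspaceB X (Finset.univ.erase i0) {B ∈ 𝔅' | i0 ∉ B}) ≤ PspaceB X Finset.univ 𝔅' := by
      rw [PspaceB, Submodule.map_span, Submodule.span_le]
      rintro q ⟨q', ⟨B, hB, rfl⟩, rfl⟩
      obtain ⟨hB𝔅, hiB⟩ := hB
      apply Submodule.subset_span
      exact ⟨B, hB𝔅, (hfac B hB𝔅 hiB).symm⟩
    exact hle ⟨p, hp, rfl⟩
  -- Part 2: injectivity
  · intro p _ h0
    rcases mul_eq_zero.1 h0 with h | h
    · exact absurd h (Aux.linPoly_ne_zero hloop)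
    · exact h
  -- Part 3: projection lands in 𝒫(X/x)
  · intro p hp
    have hle : Submodule.map
        (Ideal.Quotient.mkₐ ℝ (Ideal.span {linPoly (X i0)})).toLinearMap
        (PspaceB X Finset.univ 𝔅') ≤ PspaceContrB X i0 𝔅' := by
      rw [PspaceB, Submodule.map_span, Submodule.span_le]
      rintro q ⟨q', ⟨B, hB, rfl⟩, rfl⟩
      by_cases hiB : i0 ∈ B
      · apply Submodule.subset_span
        refine ⟨B.erase i0, ⟨B, hB, hiB, rfl⟩, ?_⟩
        show Ideal.Quotient.mk _ (QB X Finset.univ B) = _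
        rw [QB, ← hcontr B hB hiB]
      · have : (Ideal.Quotient.mkₐ ℝ (Ideal.span {linPoly (X i0)})).toLinearMap
            (QB X Finset.univ B) = 0 := by
          show Ideal.Quotient.mk _ (QB X Finset.univ B) = 0
          rw [hfac B hB hiB]
          exact Ideal.Quotient.eq_zero_iff_mem.2
            (Ideal.mul_mem_right _ _ (Ideal.subset_span (Set.mem_singleton _)))
        rw [this]
        exact Submodule.zero_mem _
    exact hle ⟨p, hp, rfl⟩
  -- Part 4: surjectivity
  · intro q hq
    have hle : PspaceContrB X i0 𝔅' ≤ Submodule.map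
        (Ideal.Quotient.mkₐ ℝ (Ideal.span {linPoly (X i0)})).toLinearMap
        (PspaceB X Finset.univ 𝔅') := by
      rw [PspaceContrB, Submodule.span_le]
      rintro q' ⟨B', ⟨B, hB, hiB, rfl⟩, rfl⟩
      refine ⟨QB X Finset.univ B, Submodule.subset_span ⟨B, hB, rfl⟩, ?_⟩
      show Ideal.Quotient.mk _ (QB X Finset.univ B) = _
      rw [QB, ← hcontr B hB hiB]
    obtain ⟨p, hp, hpq⟩ := hle hq
    exact ⟨p, hp, hpq⟩
  -- Part 5: kernel characterisation
  · intro p hp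
    constructor
    · intro h0
      obtain ⟨h, hh⟩ := (Ideal.mem_span_singleton').1 (Ideal.Quotient.eq_zero_iff_mem.1 h0)
      -- hh : h * linPoly (X i0) = p  (check orientation below)
      obtain ⟨S, hS𝔅, c, hrep⟩ := Aux.mem_span_QB X Finset.univ 𝔅' hp
      set S1 := S.filter (fun B => i0 ∈ B) with hS1
      set S2 := S.filter (fun B => ¬ i0 ∈ B) with hS2
      set g : MvPolynomial (Fin r) ℝ := ∑ B ∈ S2, c B • QB X (Finset.univ.erase i0) B with hgdef
      have hgmem : g ∈ PspaceB X (Finset.univ.erase i0) {B ∈ 𝔅' | i0 ∉ B} := by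
        refine Submodule.sum_mem _ (fun B hB2 => Submodule.smul_mem _ _ ?_)
        obtain ⟨hBS, hiB⟩ := Finset.mem_filter.1 hB2
        exact Submodule.subset_span ⟨B, ⟨hS𝔅 B hBS, hiB⟩, rfl⟩
      have hsplit : p = (∑ B ∈ S1, c B • QB X Finset.univ B) + linPoly (X i0) * g := by
        rw [hgdef, Finset.mul_sum, hrep,
          ← Finset.sum_filter_add_sum_filter_not S (fun B => i0 ∈ B)]
        congr 1
        refine Finset.sum_congr rfl (fun B hB2 => ?_)
        obtain ⟨hBS, hiB⟩ := Finset.mem_filter.1 hB2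
        rw [hfac B (hS𝔅 B hBS) hiB, mul_smul_comm]
      have hq1 : (∑ B ∈ S1, c B • QB X Finset.univ B) = linPoly (X i0) * (h - g) := by
        linear_combination - hh - hsplit
      obtain ⟨F, hF⟩ := Aux.exists_proj hloop
      have hFx : F (X i0) = 0 := by
        rw [← LinearMap.mem_ker, hF]
        exact Submodule.mem_span_singleton_self _
      have hzero : ∑ B ∈ S1, c B • QB (⇑F ∘ X) (Finset.univ.erase i0) (B.erase i0) = 0 := by
        have hccs := congrArg (Aux.contrHom F) hq1
        rw [map_mul, Aux.contrHom_linPoly, hFx, Aux.linPoly_zero, zero_mul, map_sum] at hccs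
        simp only [map_smul] at hccs
        rw [← hccs]
        refine Finset.sum_congr rfl (fun B hB1 => ?_)
        obtain ⟨hBS, hiB⟩ := Finset.mem_filter.1 hB1
        congr 1
        have hset := Aux.contr_sdiff_eq F hiB (hsub (hS𝔅 B hBS)).1 hF
          (fun j _ hj hjB => hloops B (hS𝔅 B hBS) j hj hjB)
        rw [QB, QB, Aux.contrHom_prodPoly, hset]
      have hinj : ∀ B1 ∈ S1, ∀ B2 ∈ S1, B1.erase i0 = B2.erase i0 → B1 = B2 := by
        intro B1 h1 B2 h2 h
        have hx1 : i0 ∈ B1 := (Finset.mem_filter.1 h1).2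
        have hx2 : i0 ∈ B2 := (Finset.mem_filter.1 h2).2
        rw [← Finset.insert_erase hx1, ← Finset.insert_erase hx2, h]
      have hsum' : ∑ B' ∈ S1.image (fun B => B.erase i0),
          c (insert i0 B') • QB (⇑F ∘ X) (Finset.univ.erase i0) B' = 0 := by
        rw [Finset.sum_image hinj, ← hzero]
        refine Finset.sum_congr rfl (fun B hB1 => ?_)
        have hxB : i0 ∈ B := (Finset.mem_filter.1 hB1).2
        rw [Finset.insert_erase hxB]
      have hbases' : ∀ B' ∈ S1.image (fun B => B.erase i0),
          Aux.myBasis (⇑F ∘ X) (Finset.univ.erase i0) B' := by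
        intro B' hB'
        obtain ⟨B, hB1, rfl⟩ := Finset.mem_image.1 hB'
        obtain ⟨hBS, hiB⟩ := Finset.mem_filter.1 hB1
        exact Aux.basis_contr F (hmy B (hS𝔅 B hBS)) hiB hF
      have hc1 : ∀ B ∈ S1, c B = 0 := by
        intro B hB1
        have hxB : i0 ∈ B := (Finset.mem_filter.1 hB1).2
        have := Aux.indep_QB (Finset.univ.erase i0 : Finset (Fin N)).card (⇑F ∘ X)
          (Finset.univ.erase i0) le_rfl (S1.image (fun B => B.erase i0))
          (fun B' => c (insert i0 B')) hbases' hsum'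
          (B.erase i0) (Finset.mem_image_of_mem _ hB1)
        simpa [Finset.insert_erase hxB] using this
      refine ⟨g, hgmem, ?_⟩
      have hz : ∑ B ∈ S1, c B • QB X Finset.univ B = 0 :=
        Finset.sum_eq_zero (fun B hB => by rw [hc1 B hB, zero_smul])
      rw [hsplit, hz, zero_add]
    · rintro ⟨g, hg, rfl⟩
      exact Ideal.Quotient.eq_zero_iff_mem.2
        (Ideal.mul_mem_right _ _ (Ideal.subset_span (Set.mem_singleton _)))
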